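/- Let h, h', q be nonnegative reals and μ, Δ, L, M, G, δ, γ_max positive reals with δ ≤ 1. Assume: (i) h ≤ q²/(2·μ·Δ²); (ii) for every η ∈ [0, γ_max], h − h' ≥ η·δ·G·q − (η²/2)·L·M²; and (iii) δ·G·q/(L·M²) ≤ γ_max. Then h' ≤ (1 − (μ·G²·Δ²·δ²)/(L·M²))·h. -/

import Mathlib

/-- Key algebraic step of the linear convergence proof (interior optimal step case):
combining geometric strong convexity `h ≤ q²/(2μΔ²)`, the decrease bound on `[0, γ_max]`,
and `δGq/(LM²) ≤ γ_max` yields a geometric decrease. -/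
theorem stmt_16 (h h' q μ Δ L M G δ γmax : ℝ)
    (hh : 0 ≤ h) (hh' : 0 ≤ h') (hq : 0 ≤ q)
    (hμ : 0 < μ) (hΔ : 0 < Δ) (hL : 0 < L) (hM : 0 < M) (hG : 0 < G)
    (hδ0 : 0 < δ) (hδ1 : δ ≤ 1) (hγmax : 0 < γmax)
    (h1 : h ≤ q ^ 2 / (2 * μ * Δ ^ 2))
    (h2 : ∀ η ∈ Set.Icc (0 : ℝ) γmax, h - h' ≥ η * δ * G * q - η ^ 2 / 2 * L * M ^ 2)
    (h3 : δ * G * q / (L * M ^ 2) ≤ γmax) :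
    h' ≤ (1 - μ * G ^ 2 * Δ ^ 2 * δ ^ 2 / (L * M ^ 2)) * h := by
  have hLM : 0 < L * M ^ 2 := by positivity
  set η := δ * G * q / (L * M ^ 2) with hη
  have hη0 : 0 ≤ η := by positivity
  have key := h2 η ⟨hη0, h3⟩
  have hdec : h - h' ≥ (δ * G * q) ^ 2 / (2 * (L * M ^ 2)) := by
    have : η * δ * G * q - η ^ 2 / 2 * L * M ^ 2
        = (δ * G * q) ^ 2 / (2 * (L * M ^ 2)) := by
      rw [hη]
      field_simp [hη]
      ring
    linarith [key, this ▸ key]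
  have hq2 : 2 * μ * Δ ^ 2 * h ≤ q ^ 2 := by
    have hpos : (0:ℝ) < 2 * μ * Δ ^ 2 := by positivity
    calc 2 * μ * Δ ^ 2 * h ≤ 2 * μ * Δ ^ 2 * (q ^ 2 / (2 * μ * Δ ^ 2)) := by
          exact mul_le_mul_of_nonneg_left h1 hpos.le
      _ = q ^ 2 := by field_simp
  have hstep : μ * G ^ 2 * Δ ^ 2 * δ ^ 2 / (L * M ^ 2) * h
      ≤ (δ * G * q) ^ 2 / (2 * (L * M ^ 2)) := by
    rw [div_mul_eq_mul_div, div_le_div_iff₀ hLM (by positivity)]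
    nlinarith [mul_le_mul_of_nonneg_left hq2 (show (0:ℝ) ≤ δ^2 * G^2 * (L * M^2) by positivity)]
  nlinarith
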